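/- Let A be a finite-dimensional real commutative associative (not necessarily unital) algebra, and for x ∈ A let L_x denote the multiplication operator L_x(y) = xy. Then the following are equivalent: (i) tr L_x = 0 for every x ∈ A; (ii) L_x is a nilpotent operator for every x ∈ A; (iii) every element x ∈ A is nilpotent, i.e., x^m = 0 for some m ≥ 1. -/

import Mathlib

open LinearMap Module Set

/-- Trace of powers of an endomorphism which is `μ • 1` plus nilpotent. -/
lemma trace_pow_of_isNilpotent_sub {K V : Type*} [Field K] [AddCommGroup V] [Module K V]
    [FiniteDimensional K V] (g : Module.End K V) (μ : K)
    (hg : IsNilpotent (g - algebraMap K (Module.End K V) μ)) (k : ℕ) (hk : 1 ≤ k) :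
    LinearMap.trace K V (g ^ k) = μ ^ k * (Module.finrank K V : K) := by
  induction k with
  | zero => omega
  | succ n ih =>
    rcases Nat.eq_or_lt_of_le hk with h1 | h2
    · rw [← h1, pow_one, ← one_mul g, Module.End.mul_eq_comp,
        trace_comp_eq_mul_of_commute_of_isNilpotent μ (Commute.one_left g) hg,
        LinearMap.trace_one, pow_one]
    · have hn : 1 ≤ n := by omega
      have hgs : g ^ (n + 1) = (g ^ n) ∘ₗ g := by rw [pow_succ, Module.End.mul_eq_comp]
      have hc : Commute (g ^ n) g := (Commute.refl g).pow_left n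
      rw [hgs, trace_comp_eq_mul_of_commute_of_isNilpotent μ hc hg, ih hn, pow_succ]
      ring

/-- Over `ℂ`, an endomorphism all of whose power traces vanish is nilpotent. -/
lemma isNilpotent_of_trace_pow {V : Type*} [AddCommGroup V] [Module ℂ V]
    [FiniteDimensional ℂ V] (f : Module.End ℂ V)
    (h : ∀ k, 1 ≤ k → LinearMap.trace ℂ V (f ^ k) = 0) : IsNilpotent f := by
  classical
  set S := f.maxGenEigenspace with hS
  have hsup : ⨆ μ, S μ = ⊤ := Module.End.iSup_maxGenEigenspace_eq_top f
  have hind := f.independent_maxGenEigenspace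
  have hds := DirectSum.isInternal_submodule_of_iSupIndep_of_iSup_eq_top hind hsup
  have hfin : {μ | S μ ≠ ⊥}.Finite := WellFoundedGT.finite_ne_bot_of_iSupIndep hind
  have hm1 : ∀ μ : ℂ, MapsTo f (S μ) (S μ) := fun μ =>
    f.mapsTo_maxGenEigenspace_of_comm rfl μ
  have hmk : ∀ (k : ℕ) (μ : ℂ), MapsTo (f ^ k) (S μ) (S μ) := fun k μ =>
    f.mapsTo_maxGenEigenspace_of_comm ((Commute.refl f).pow_right k) μ
  -- the restriction of `f` minus `μ` is nilpotent
  have hnil : ∀ μ : ℂ, IsNilpotent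
      (f.restrict (hm1 μ) - algebraMap ℂ (Module.End ℂ (S μ)) μ) := by
    intro μ
    have := f.isNilpotent_restrict_maxGenEigenspace_sub_algebraMap μ
    convert this using 2
    ext v; rfl
  have key : ∀ k, 1 ≤ k →
      ∑ μ ∈ hfin.toFinset, μ ^ k * (Module.finrank ℂ (S μ) : ℂ) = 0 := by
    intro k hk
    rw [← h k hk, LinearMap.trace_eq_sum_trace_restrict' hds hfin (fun μ => hmk k μ)]
    refine Finset.sum_congr rfl fun μ _ => ?_
    have hres : (f ^ k).restrict (hmk k μ) = (f.restrict (hm1 μ)) ^ k := by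
      exact (Module.End.pow_restrict k (hm1 μ) (hmk k μ)).symm
    rw [hres, trace_pow_of_isNilpotent_sub _ μ (hnil μ) k hk]
  -- Vandermonde argument: every nonzero eigenvalue forces a contradiction
  have hzero : ∀ μ : ℂ, μ ≠ 0 → S μ = ⊥ := by
    intro μ hμ
    by_contra hbot
    have hμT : μ ∈ hfin.toFinset := by simpa using hbot
    set T := hfin.toFinset with hT
    set r := T.card with hr
    let e : T ≃ Fin r := T.equivFin
    set nodes : Fin r → ℂ := fun i => ((e.symm i : T) : ℂ) with hnodes
    set w : Fin r → ℂ := fun i => nodes i * (Module.finrank ℂ (S (nodes i)) : ℂ) with hw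
    have hinj : Function.Injective nodes := fun i j hij => by
      apply e.symm.injective
      exact Subtype.ext hij
    have hsum : ∀ i : Fin r, ∑ j, w j * nodes j ^ (i : ℕ) = 0 := by
      intro i
      have := key ((i : ℕ) + 1) (by omega)
      rw [← this, ← Finset.sum_coe_sort T]
      rw [← e.symm.sum_comp (fun t => ((t : ℂ)) ^ ((i : ℕ) + 1) * (Module.finrank ℂ (S (t : ℂ)) : ℂ))]
      refine Finset.sum_congr rfl fun j _ => ?_
      simp only [hw, hnodes]
      ring
    have hw0 : w = 0 := Matrix.eq_zero_of_forall_pow_sum_mul_pow_eq_zero hinj hsum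
    have hnode : nodes (e ⟨μ, hμT⟩) = μ := by simp [hnodes]
    have h0 : μ * (Module.finrank ℂ (S μ) : ℂ) = 0 := by
      have := congrFun hw0 (e ⟨μ, hμT⟩)
      simpa [hw, hnode] using this
    rcases mul_eq_zero.mp h0 with h' | h'
    · exact hμ h'
    · have : Module.finrank ℂ (S μ) = 0 := by exact_mod_cast h'
      exact hbot (Submodule.finrank_eq_zero.mp this)
  -- hence the generalized 0-eigenspace is everything
  have htop : S 0 = ⊤ := by
    rw [← hsup]
    refine le_antisymm (le_iSup S 0) (iSup_le fun μ => ?_)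
    by_cases hμ : μ = 0
    · rw [hμ]
    · rw [hzero μ hμ]; exact bot_le
  -- conclude nilpotency
  have hall : ∀ v : V, ∃ n : ℕ, (f ^ n) v = 0 := by
    intro v
    have hv : v ∈ S 0 := htop ▸ Submodule.mem_top
    rw [hS, Module.End.mem_maxGenEigenspace] at hv
    obtain ⟨n, hn⟩ := hv
    exact ⟨n, by simpa using hn⟩
  exact (LinearMap.charpoly_nilpotent_tfae f).out 2 0 |>.mp hall

/-- Over `ℝ`, an endomorphism all of whose power traces vanish is nilpotent. -/
lemma isNilpotent_of_trace_pow_real {V : Type*} [AddCommGroup V] [Module ℝ V]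
    [FiniteDimensional ℝ V] (f : Module.End ℝ V)
    (h : ∀ k, 1 ≤ k → LinearMap.trace ℝ V (f ^ k) = 0) : IsNilpotent f := by
  set n := Module.finrank ℝ V with hn
  let b := Module.finBasis ℝ V
  set M : Matrix (Fin n) (Fin n) ℝ := LinearMap.toMatrixAlgEquiv b f with hM
  set φ : Matrix (Fin n) (Fin n) ℝ →+* Matrix (Fin n) (Fin n) ℂ := (algebraMap ℝ ℂ).mapMatrix with hφ
  set g : Module.End ℂ (Fin n → ℂ) := Matrix.toLinAlgEquiv' (φ M) with hg
  have hgk : ∀ k, 1 ≤ k → LinearMap.trace ℂ _ (g ^ k) = 0 := by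
    intro k hk
    rw [hg, ← map_pow, ← map_pow]
    rw [LinearMap.trace_eq_matrix_trace ℂ (Pi.basisFun ℂ (Fin n))]
    have : LinearMap.toMatrix (Pi.basisFun ℂ (Fin n)) (Pi.basisFun ℂ (Fin n))
        (Matrix.toLinAlgEquiv' (φ (M ^ k))) = φ (M ^ k) := by
      rw [LinearMap.toMatrix_eq_toMatrix']
      exact LinearMap.toMatrixAlgEquiv'_toLinAlgEquiv' _
    rw [this]
    have htr : (φ (M ^ k)).trace = algebraMap ℝ ℂ ((M ^ k).trace) := by
      simp [hφ, Matrix.trace, RingHom.mapMatrix_apply, Matrix.diag_map]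
    rw [htr]
    have : (M ^ k).trace = LinearMap.trace ℝ V (f ^ k) := by
      rw [hM, ← map_pow, LinearMap.trace_eq_matrix_trace ℝ b]
      rfl
    rw [this, h k hk, map_zero]
  obtain ⟨m, hm⟩ := isNilpotent_of_trace_pow g hgk
  refine ⟨m, ?_⟩
  have h1 : φ (M ^ m) = 0 := by
    have : Matrix.toLinAlgEquiv' (φ (M ^ m)) = 0 := by
      rw [map_pow, map_pow, ← hg, hm]
    simpa using (_root_.map_eq_zero_iff _ (AlgEquiv.injective _)).mp this
  have h2 : M ^ m = 0 := by
    have hinj : Function.Injective φ := by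
      rw [hφ]
      exact fun X Y hXY => Matrix.map_injective (algebraMap ℝ ℂ).injective hXY
    apply hinj
    rw [h1, map_zero]
  have : LinearMap.toMatrixAlgEquiv b (f ^ m) = 0 := by rw [map_pow, ← hM, h2]
  exact (_root_.map_eq_zero_iff _ (AlgEquiv.injective _)).mp this

/-- Powers in an algebra: `x¹ = x`, `x^{k+1} = x·x^k`, i.e. `x^k = L_x^{k-1} x`.
(The value at `k = 0` is junk.) -/
noncomputable def jpow {A : Type*} [AddCommGroup A] [Module ℝ A]
    (mul : A →ₗ[ℝ] A →ₗ[ℝ] A) (x : A) (k : ℕ) : A :=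
  ((mul x) ^ (k - 1)) x

/-- for a finite-dimensional real commutative associative algebra `A` the
following are equivalent: (i) `tr L_x = 0` for every `x`; (ii) `L_x` is nilpotent for every
`x`; (iii) every element of `A` is nilpotent. -/
theorem stmt_18 {A : Type*} [AddCommGroup A] [Module ℝ A] [FiniteDimensional ℝ A]
    (mul : A →ₗ[ℝ] A →ₗ[ℝ] A)
    (hcomm : ∀ u v, mul u v = mul v u)
    (hassoc : ∀ u v w, mul (mul u v) w = mul u (mul v w)) :
    ((∀ x, LinearMap.trace ℝ A (mul x) = 0) ↔ (∀ x, IsNilpotent (mul x))) ∧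
    ((∀ x, IsNilpotent (mul x)) ↔ (∀ x : A, ∃ m, 1 ≤ m ∧ jpow mul x m = 0)) := by
  have hLpow : ∀ (x : A) (k : ℕ) (y : A),
      ((mul x) ^ k) (mul x y) = mul (((mul x) ^ k) x) y := by
    intro x k
    induction k with
    | zero => intro y; simp
    | succ n ih =>
      intro y
      have h1 : (mul x) ^ (n + 1) = mul x ∘ₗ (mul x) ^ n := by
        rw [pow_succ', Module.End.mul_eq_comp]
      rw [h1]
      simp only [LinearMap.comp_apply]
      rw [ih y, ← hassoc x (((mul x) ^ n) x) y]
  have hmul : ∀ (x : A) (k : ℕ), mul (jpow mul x (k + 1)) = (mul x) ^ (k + 1) := by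
    intro x k
    ext y
    show mul (((mul x) ^ (k + 1 - 1)) x) y = ((mul x) ^ (k + 1)) y
    rw [Nat.add_sub_cancel, ← hLpow x k y, pow_succ, Module.End.mul_eq_comp]
    rfl
  refine ⟨⟨fun hi x => ?_, fun hii x => ?_⟩, ⟨fun hii x => ?_, fun hiii x => ?_⟩⟩
  · apply isNilpotent_of_trace_pow_real
    intro k hk
    obtain ⟨j, rfl⟩ : ∃ j, k = j + 1 := ⟨k - 1, by omega⟩
    rw [← hmul x j]
    exact hi _
  · exact (LinearMap.isNilpotent_trace_of_isNilpotent (hii x)).eq_zero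
  · obtain ⟨n, hn⟩ := hii x
    exact ⟨n + 1, by omega, by simp [jpow, Nat.add_sub_cancel, hn]⟩
  · obtain ⟨m, hm1, hm0⟩ := hiii x
    obtain ⟨k, rfl⟩ : ∃ k, m = k + 1 := ⟨m - 1, by omega⟩
    exact ⟨k + 1, by rw [← hmul x k, hm0]; exact map_zero mul⟩
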